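/- Suppose {νₙ} is a sequence of Borel probability measures on X, Φ = {log φₙ} a subadditive potential, and μₙ = (1/n) Σ_{i=0}^{n-1} νₙ ∘ T^{-i}. If μ_{nᵢ} converges weakly-* to μ along a subsequence nᵢ, then μ is T-invariant and limsup_{i→∞} (1/nᵢ) ∫ log φ_{nᵢ} dν_{nᵢ} ≤ χ(μ,Φ). -/

import Mathlib

open MeasureTheory Filter Topology Set
open scoped ENNReal NNReal

/-- Positive part of an extended real, as an extended nonnegative real. -/
noncomputable def EReal.posPart (a : EReal) : ℝ≥0∞ :=
  if a = ⊤ then ⊤ else ENNReal.ofReal a.toReal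

/-- `EReal`-valued logarithm of a real number: `elog r = -∞` for `r ≤ 0`. -/
noncomputable def elog (r : ℝ) : EReal := ENNReal.log (ENNReal.ofReal r)

/-- The integral of an `EReal`-valued function, with values in `[-∞, ∞]`. -/
noncomputable def eint {X : Type*} [MeasurableSpace X] (μ : Measure X) (f : X → EReal) : EReal :=
  ((∫⁻ x, (f x).posPart ∂μ : ℝ≥0∞) : EReal) - ((∫⁻ x, (-f x).posPart ∂μ : ℝ≥0∞) : EReal)

/-- `Φ = {log φₙ}` is a subadditive potential for `T`: each `φₙ` is continuous,
nonnegative, and `φ_{n+m}(x) ≤ φₙ(x) · φₘ(Tⁿ x)`. -/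
def SubadditivePotential {X : Type*} [TopologicalSpace X] (T : X → X) (φ : ℕ → X → ℝ) : Prop :=
  (∀ n, 1 ≤ n → Continuous (φ n)) ∧ (∀ n x, 1 ≤ n → 0 ≤ φ n x) ∧
    (∀ m n : ℕ, 1 ≤ m → 1 ≤ n → ∀ x, φ (n + m) x ≤ φ n x * φ m (T^[n] x))
lemma posPart_coe (r : ℝ) : EReal.posPart (r : EReal) = ENNReal.ofReal r := by
  simp [EReal.posPart]
lemma ePosPart_mono {a b : EReal} (h : a ≤ b) : EReal.posPart a ≤ EReal.posPart b := by
  unfold EReal.posPart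
  rcases eq_or_ne b ⊤ with hb | hb
  · simp [hb]
  rcases eq_or_ne a ⊤ with ha | ha
  · exact absurd (top_le_iff.1 (ha ▸ h)) hb
  simp only [ha, hb, if_neg, if_false]
  rcases eq_or_ne a ⊥ with hab | hab
  · simp [hab]
  exact ENNReal.ofReal_le_ofReal (EReal.toReal_le_toReal h hab hb)
lemma elog_mono {r s : ℝ} (h : r ≤ s) : elog r ≤ elog s :=
  ENNReal.log_monotone (ENNReal.ofReal_le_ofReal h)
lemma elog_pos_eq {r : ℝ} (h : 0 < r) : elog r = ((Real.log r : ℝ) : EReal) :=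
  ENNReal.log_ofReal_of_pos h
lemma coe_ennreal_toReal' {a : ℝ≥0∞} (ha : a ≠ ⊤) : ((a.toReal : ℝ) : EReal) = (a : EReal) := by
  rw [← EReal.toReal_coe_ennreal]
  exact EReal.coe_toReal (by simpa [EReal.coe_ennreal_eq_top_iff])
    (ne_of_gt (lt_of_lt_of_le (by simp : (⊥:EReal) < 0) (EReal.coe_ennreal_nonneg a)))
lemma lintegral_ofReal_lt_top {X : Type*} [MetricSpace X] [CompactSpace X] [MeasurableSpace X]
    [BorelSpace X] (μ : Measure X) [IsFiniteMeasure μ] (g : X → ℝ) (hg : Continuous g) :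
    ∫⁻ x, ENNReal.ofReal (g x) ∂μ < ⊤ := by
  obtain ⟨C, hC⟩ := (isCompact_range hg).bddAbove
  calc ∫⁻ x, ENNReal.ofReal (g x) ∂μ ≤ ∫⁻ _, ENNReal.ofReal C ∂μ :=
        lintegral_mono fun x => ENNReal.ofReal_le_ofReal (hC ⟨x, rfl⟩)
    _ = ENNReal.ofReal C * μ univ := by rw [lintegral_const]
    _ < ⊤ := ENNReal.mul_lt_top ENNReal.ofReal_lt_top (measure_lt_top μ univ)

lemma posPart_elog (r : ℝ) (hr : 0 ≤ r) :
    (elog r).posPart = ENNReal.ofReal (Real.log r) := by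
  rcases eq_or_lt_of_le hr with h | h
  · simp [elog, ← h, EReal.posPart]
  · rw [elog_pos_eq h, posPart_coe]

lemma negPart_elog_pos {r : ℝ} (h : 0 < r) :
    (-elog r).posPart = ENNReal.ofReal (-Real.log r) := by
  rw [elog_pos_eq h, ← EReal.coe_neg, posPart_coe]

lemma negPart_elog_zero : (-elog 0).posPart = ⊤ := by
  simp [elog, EReal.posPart]

lemma integral_coe_eq_sub {X : Type*} [MetricSpace X] [CompactSpace X] [MeasurableSpace X]
    [BorelSpace X] (μ : Measure X) [IsFiniteMeasure μ] (g : X → ℝ) (hg : Continuous g) :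
    ((∫ x, g x ∂μ : ℝ) : EReal)
      = ((∫⁻ x, ENNReal.ofReal (g x) ∂μ : ℝ≥0∞) : EReal)
        - ((∫⁻ x, ENNReal.ofReal (-g x) ∂μ : ℝ≥0∞) : EReal) := by
  have hint : Integrable g μ := by
    rw [← integrableOn_univ]; exact hg.continuousOn.integrableOn_compact isCompact_univ
  have hAg : ∫⁻ x, ENNReal.ofReal (g x) ∂μ ≠ ⊤ := (lintegral_ofReal_lt_top μ g hg).ne
  have hBg : ∫⁻ x, ENNReal.ofReal (-g x) ∂μ ≠ ⊤ := (lintegral_ofReal_lt_top μ _ hg.neg).ne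
  rw [integral_eq_lintegral_pos_part_sub_lintegral_neg_part hint, EReal.coe_sub,
    coe_ennreal_toReal' hAg, coe_ennreal_toReal' hBg]

lemma tendsto_integral_log_add {X : Type*} [MetricSpace X] [CompactSpace X] [MeasurableSpace X]
    [BorelSpace X] (μ : Measure X) [IsFiniteMeasure μ] (f : X → ℝ) (hf : Continuous f)
    (hnn : ∀ x, 0 ≤ f x) :
    Tendsto (fun j : ℕ => ((∫ x, Real.log (f x + 1/(j+1)) ∂μ : ℝ) : EReal)) atTop
      (𝓝 (eint μ (fun x => elog (f x)))) := by
  obtain ⟨K, hK⟩ := (isCompact_range hf).bddAbove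
  have hKb : ∀ x, f x ≤ K := fun x => hK ⟨x, rfl⟩
  set ε : ℕ → ℝ := fun j => 1/(j+1) with hε
  have hεpos : ∀ j, (0:ℝ) < ε j := fun j => by positivity
  have hεle1 : ∀ j, ε j ≤ 1 := fun j => by
    rw [hε]; simp only [one_div]
    rw [inv_le_one_iff₀]; right; push_cast; linarith
  have hεanti : ∀ j j' : ℕ, j ≤ j' → ε j' ≤ ε j := by
    intro j j' h
    apply div_le_div_of_nonneg_left one_pos.le (by positivity)
    have : (j:ℝ) ≤ j' := by exact_mod_cast h
    linarith
  have hpos : ∀ j x, (0:ℝ) < f x + ε j := fun j x => by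
    have := hnn x; have := hεpos j; linarith
  have hgc : ∀ j, Continuous fun x => Real.log (f x + ε j) :=
    fun j => (hf.add continuous_const).log fun x => ne_of_gt (hpos j x)
  have hK1 : ∀ j x, f x + ε j ≤ K + 1 := fun j x => add_le_add (hKb x) (hεle1 j)
  set A : ℝ≥0∞ := ∫⁻ x, (elog (f x)).posPart ∂μ with hA
  set B : ℝ≥0∞ := ∫⁻ x, (-elog (f x)).posPart ∂μ with hB
  set a : ℕ → ℝ≥0∞ := fun j => ∫⁻ x, ENNReal.ofReal (Real.log (f x + ε j)) ∂μ with ha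
  set b : ℕ → ℝ≥0∞ := fun j => ∫⁻ x, ENNReal.ofReal (-Real.log (f x + ε j)) ∂μ with hb
  have haj : Tendsto a atTop (𝓝 A) := by
    apply tendsto_lintegral_of_dominated_convergence
      (bound := fun _ => ENNReal.ofReal (Real.log (K+1)))
    · exact fun j => ENNReal.measurable_ofReal.comp (hgc j).measurable
    · intro j
      filter_upwards with x
      exact ENNReal.ofReal_le_ofReal (Real.log_le_log (hpos j x) (hK1 j x))
    · rw [lintegral_const]
      exact ENNReal.mul_ne_top ENNReal.ofReal_ne_top (measure_ne_top μ univ)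
    · filter_upwards with x
      rcases eq_or_lt_of_le (hnn x) with h | h
      · have hconst : ∀ j, ENNReal.ofReal (Real.log (f x + ε j)) = 0 := by
          intro j
          rw [ENNReal.ofReal_eq_zero]
          apply Real.log_nonpos (hpos j x).le
          rw [← h]; simpa using hεle1 j
        simp_rw [hconst, posPart_elog (f x) (hnn x), ← h]
        simp [Real.log_zero]
      · rw [posPart_elog (f x) (hnn x)]
        apply (ENNReal.continuous_ofReal.tendsto _).comp
        apply (Real.continuousAt_log (ne_of_gt h)).tendsto.comp
        have : Tendsto (fun j : ℕ => f x + ε j) atTop (𝓝 (f x + 0)) :=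
          tendsto_const_nhds.add tendsto_one_div_add_atTop_nhds_zero_nat
        simpa using this
  have hbj : Tendsto b atTop (𝓝 B) := by
    apply lintegral_tendsto_of_tendsto_of_monotone
    · exact fun j => (ENNReal.measurable_ofReal.comp (hgc j).neg.measurable).aemeasurable
    · filter_upwards with x
      intro j j' hjj
      exact ENNReal.ofReal_le_ofReal
        (neg_le_neg (Real.log_le_log (hpos j' x) (by linarith [hεanti j j' hjj])))
    · filter_upwards with x
      rcases eq_or_lt_of_le (hnn x) with h | h
      · have heq : ∀ j, -Real.log (f x + ε j) = Real.log ((j:ℝ)+1) := by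
          intro j
          rw [← h, zero_add]
          simp only [hε, one_div, Real.log_inv, neg_neg]
        simp_rw [heq, ← h, negPart_elog_zero]
        apply ENNReal.tendsto_ofReal_atTop.comp
        exact Real.tendsto_log_atTop.comp
          (tendsto_atTop_add_const_right atTop 1 tendsto_natCast_atTop_atTop)
      · rw [negPart_elog_pos h]
        apply (ENNReal.continuous_ofReal.tendsto _).comp
        apply (((Real.continuousAt_log (ne_of_gt h)).tendsto).comp ?_).neg
        have : Tendsto (fun j : ℕ => f x + ε j) atTop (𝓝 (f x + 0)) :=
          tendsto_const_nhds.add tendsto_one_div_add_atTop_nhds_zero_nat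
        simpa using this
  have hAne : A ≠ ⊤ := by
    refine ne_of_lt (lt_of_le_of_lt ?_ (lintegral_ofReal_lt_top μ (fun _ => Real.log (K+1))
      continuous_const))
    apply lintegral_mono
    intro x
    show (elog (f x)).posPart ≤ ENNReal.ofReal (Real.log (K + 1))
    rw [posPart_elog (f x) (hnn x)]
    apply ENNReal.ofReal_le_ofReal
    rcases eq_or_lt_of_le (hnn x) with h | h
    · rw [← h, Real.log_zero]
      apply Real.log_nonneg
      have := hnn x; have := hKb x; linarith
    · exact Real.log_le_log h (by linarith [hKb x])
  have hkey : ∀ j, ((∫ x, Real.log (f x + ε j) ∂μ : ℝ) : EReal)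
      = ((a j : ℝ≥0∞) : EReal) - ((b j : ℝ≥0∞) : EReal) :=
    fun j => integral_coe_eq_sub μ _ (hgc j)
  have h1 : Tendsto (fun j => ((a j : ℝ≥0∞) : EReal)) atTop (𝓝 ((A : ℝ≥0∞) : EReal)) :=
    EReal.tendsto_coe_ennreal.mpr haj
  have h2 : Tendsto (fun j => ((b j : ℝ≥0∞) : EReal)) atTop (𝓝 ((B : ℝ≥0∞) : EReal)) :=
    EReal.tendsto_coe_ennreal.mpr hbj
  have hfinal : Tendsto (fun j => ((a j : ℝ≥0∞) : EReal) - ((b j : ℝ≥0∞) : EReal)) atTop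
      (𝓝 (((A : ℝ≥0∞) : EReal) - ((B : ℝ≥0∞) : EReal))) := by
    simp_rw [sub_eq_add_neg]
    have h2n : Tendsto (fun j => -((b j : ℝ≥0∞) : EReal)) atTop (𝓝 (-((B : ℝ≥0∞) : EReal))) :=
      h2.neg
    have hadd : ContinuousAt (fun p : EReal × EReal => p.1 + p.2)
        (((A : ℝ≥0∞) : EReal), -((B : ℝ≥0∞) : EReal)) := by
      apply EReal.continuousAt_add
      · left; simpa [EReal.coe_ennreal_eq_top_iff] using hAne
      · left
        exact ne_of_gt (lt_of_lt_of_le (by simp : (⊥:EReal) < 0) (EReal.coe_ennreal_nonneg A))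
    exact hadd.tendsto.comp (h1.prodMk_nhds h2n)
  show Tendsto (fun j : ℕ => ((∫ x, Real.log (f x + ε j) ∂μ : ℝ) : EReal)) atTop _
  simp_rw [hkey]
  exact hfinal

lemma eint_le_integral {X : Type*} [MetricSpace X] [CompactSpace X] [MeasurableSpace X]
    [BorelSpace X] (μ : Measure X) [IsFiniteMeasure μ] (f : X → EReal) (g : X → ℝ)
    (hg : Continuous g) (h : ∀ x, f x ≤ (g x : EReal)) :
    eint μ f ≤ ((∫ x, g x ∂μ : ℝ) : EReal) := by
  have hint : Integrable g μ := by
    rw [← integrableOn_univ]; exact hg.continuousOn.integrableOn_compact isCompact_univ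
  have hAg : ∫⁻ x, ENNReal.ofReal (g x) ∂μ ≠ ⊤ := (lintegral_ofReal_lt_top μ g hg).ne
  have hBg : ∫⁻ x, ENNReal.ofReal (-g x) ∂μ ≠ ⊤ := (lintegral_ofReal_lt_top μ _ hg.neg).ne
  have key : ((∫ x, g x ∂μ : ℝ) : EReal)
      = ((∫⁻ x, ENNReal.ofReal (g x) ∂μ : ℝ≥0∞) : EReal)
        - ((∫⁻ x, ENNReal.ofReal (-g x) ∂μ : ℝ≥0∞) : EReal) := by
    rw [integral_eq_lintegral_pos_part_sub_lintegral_neg_part hint, EReal.coe_sub,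
      coe_ennreal_toReal' hAg, coe_ennreal_toReal' hBg]
  rw [key]
  refine EReal.sub_le_sub ?_ ?_
  · exact EReal.coe_ennreal_le_coe_ennreal_iff.2 <| lintegral_mono fun x => by
      simpa [posPart_coe] using ePosPart_mono (h x)
  · exact EReal.coe_ennreal_le_coe_ennreal_iff.2 <| lintegral_mono fun x => by
      have h2 : (-(g x : EReal)) ≤ -f x := EReal.neg_le_neg_iff.mpr (h x)
      simpa [← EReal.coe_neg, posPart_coe] using ePosPart_mono h2

section Comb
variable {X : Type*} (T : X → X) (φ : ℕ → X → ℝ)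
  (hsub : ∀ m n : ℕ, 1 ≤ m → 1 ≤ n → ∀ x, φ (n + m) x ≤ φ n x * φ m (T^[n] x))
  (hnn : ∀ n x, 1 ≤ n → 0 ≤ φ n x)
  (M : ℝ) (hM1 : 1 ≤ M) (hφ1 : ∀ x, φ 1 x ≤ M)

include hsub hnn hM1 hφ1 in
lemma phi_le_pow : ∀ q, 1 ≤ q → ∀ x, φ q x ≤ M ^ q := by
  intro q
  induction q with
  | zero => omega
  | succ q ih =>
    intro _ x
    rcases Nat.eq_zero_or_pos q with h | hq
    · subst h; simpa using hφ1 x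
    calc φ (q + 1) x ≤ φ q x * φ 1 (T^[q] x) := hsub 1 q le_rfl hq x
      _ ≤ M ^ q * M := by
        apply mul_le_mul (ih hq x) (hφ1 _) (hnn 1 _ le_rfl)
        positivity
      _ = M ^ (q + 1) := by ring

include hsub hnn hM1 hφ1 in
lemma phi_block (m : ℕ) (hm : 1 ≤ m) (ε : ℝ) (hε : 0 < ε) :
    ∀ k q y, 1 ≤ q →
      φ (k * m + q) y ≤ (∏ j ∈ Finset.range k, (φ m (T^[j * m] y) + ε)) * M ^ q := by
  intro k
  induction k with
  | zero => intro q y hq; simpa using phi_le_pow T φ hsub hnn M hM1 hφ1 q hq y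
  | succ k ih =>
    intro q y hq
    have hkq : 1 ≤ k * m + q := by omega
    have h1 : φ ((k+1) * m + q) y ≤ φ m y * φ (k * m + q) (T^[m] y) := by
      have := hsub (k * m + q) m hkq hm y
      have he : (k+1) * m + q = m + (k * m + q) := by ring
      rwa [he]
    have h2 := ih q (T^[m] y) hq
    have h3 : ∀ j : ℕ, T^[j * m] (T^[m] y) = T^[(j+1) * m] y := by
      intro j
      rw [← Function.iterate_add_apply]
      congr 1; ring
    calc φ ((k+1) * m + q) y ≤ φ m y * φ (k * m + q) (T^[m] y) := h1
      _ ≤ φ m y * ((∏ j ∈ Finset.range k, (φ m (T^[j * m] (T^[m] y)) + ε)) * M ^ q) := by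
        apply mul_le_mul_of_nonneg_left h2 (hnn m y hm)
      _ ≤ (φ m y + ε) * ((∏ j ∈ Finset.range k, (φ m (T^[(j+1) * m] y) + ε)) * M ^ q) := by
        simp_rw [h3]
        apply mul_le_mul_of_nonneg_right (by linarith)
        apply mul_nonneg (Finset.prod_nonneg fun j _ => by
          have := hnn m (T^[(j+1)*m] y) hm; linarith)
        positivity
      _ = (∏ j ∈ Finset.range (k+1), (φ m (T^[j * m] y) + ε)) * M ^ q := by
        rw [Finset.prod_range_succ']
        simp only [Nat.zero_mul, Function.iterate_zero_apply]
        ring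

include hsub hnn hM1 hφ1 in
lemma phi_decomp (m : ℕ) (hm : 1 ≤ m) (ε : ℝ) (hε : 0 < ε) (n : ℕ)
    (hn : 2 * m ≤ n) :
    ∃ k : ℕ, k * m ≤ n ∧ n - k * m ≤ 2 * m ∧ ∀ l, l < m → ∃ q : ℕ, 1 ≤ q ∧ q ≤ 2 * m ∧
      ∀ x, φ n x ≤ M ^ l * ((∏ j ∈ Finset.range k, (φ m (T^[l + j * m] x) + ε)) * M ^ q) := by
  obtain ⟨K, r, hr, hnK⟩ : ∃ K r, r < m ∧ n = m * K + r :=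
    ⟨n / m, n % m, Nat.mod_lt _ hm, (Nat.div_add_mod n m).symm⟩
  have hK2 : 2 ≤ K := by
    by_contra h
    interval_cases K <;> omega
  obtain ⟨k, rfl⟩ : ∃ k, K = k + 1 := ⟨K - 1, by omega⟩
  have haux : m * (k + 1) = k * m + m := by ring
  refine ⟨k, by omega, by omega, ?_⟩
  intro l hl
  set q : ℕ := m + r - l with hqdef
  have hq1 : 1 ≤ q := by omega
  have hq2 : q ≤ 2 * m := by omega
  have hnlkq : n = l + (k * m + q) := by omega
  refine ⟨q, hq1, hq2, ?_⟩
  intro x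
  rcases Nat.eq_zero_or_pos l with hl0 | hl1
  · subst hl0
    have := phi_block T φ hsub hnn M hM1 hφ1 m hm ε hε k q x hq1
    simp only [zero_add] at hnlkq ⊢
    rw [hnlkq]
    simpa using this
  · have h1 : φ n x ≤ φ l x * φ (k * m + q) (T^[l] x) := by
      have := hsub (k * m + q) l (by omega) hl1 x
      rwa [← hnlkq] at this
    have h2 := phi_block T φ hsub hnn M hM1 hφ1 m hm ε hε k q (T^[l] x) hq1
    have h3 : ∀ j : ℕ, T^[j * m] (T^[l] x) = T^[l + j * m] x := by
      intro j; rw [← Function.iterate_add_apply]; congr 1; ring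
    simp_rw [h3] at h2
    calc φ n x ≤ φ l x * φ (k * m + q) (T^[l] x) := h1
      _ ≤ M ^ l * ((∏ j ∈ Finset.range k, (φ m (T^[l + j * m] x) + ε)) * M ^ q) := by
        apply mul_le_mul (phi_le_pow T φ hsub hnn M hM1 hφ1 l hl1 x) h2
          (hnn _ _ (by omega)) (by positivity)
end Comb



lemma sum_sum_aux (f : ℕ → ℝ) (m : ℕ) :
    ∀ k, ∑ l ∈ Finset.range m, ∑ j ∈ Finset.range k, f (l + j * m)
      = ∑ i ∈ Finset.range (k * m), f i := by
  intro k
  induction k with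
  | zero => simp
  | succ k ih =>
    have h1 : (k + 1) * m = k * m + m := by ring
    rw [h1, Finset.sum_range_add]
    simp_rw [Finset.sum_range_succ, Finset.sum_add_distrib, ih]
    congr 1
    exact Finset.sum_congr rfl fun l _ => by rw [Nat.add_comm]

section Comb2
variable {X : Type*} (T : X → X) (φ : ℕ → X → ℝ)
  (hsub : ∀ m n : ℕ, 1 ≤ m → 1 ≤ n → ∀ x, φ (n + m) x ≤ φ n x * φ m (T^[n] x))
  (hnn : ∀ n x, 1 ≤ n → 0 ≤ φ n x)
  (M : ℝ) (hM1 : 1 ≤ M) (hφ1 : ∀ x, φ 1 x ≤ M)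

include hsub hnn hM1 hφ1 in
lemma pointwise_bound (m : ℕ) (hm : 1 ≤ m) (ε : ℝ) (hε : 0 < ε)
    (G : ℝ) (hG : ∀ y, |Real.log (φ m y + ε)| ≤ G)
    (n : ℕ) (hn : 2 * m ≤ n) (x : X) :
    elog (φ n x) ≤
      (((∑ i ∈ Finset.range n, Real.log (φ m (T^[i] x) + ε)) / m
        + (3 * m * Real.log M + 3 * G) : ℝ) : EReal) := by
  have hG0 : 0 ≤ G := (abs_nonneg _).trans (hG x)
  have hlogM : 0 ≤ Real.log M := Real.log_nonneg hM1
  have hMpos : (0:ℝ) < M := lt_of_lt_of_le one_pos hM1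
  have hfacpos : ∀ y, 0 < φ m y + ε := fun y => by
    have := hnn m y hm; linarith
  obtain ⟨k, hkm, hnk2, hdec⟩ := phi_decomp T φ hsub hnn M hM1 hφ1 m hm ε hε n hn
  set g : X → ℝ := fun y => Real.log (φ m y + ε) with hgdef
  set S : ℕ → ℝ := fun l => ∑ j ∈ Finset.range k, g (T^[l + j * m] x) with hSdef
  set Bsum : ℝ := ∑ i ∈ Finset.range (k * m), g (T^[i] x) with hBdef
  set Fsum : ℝ := ∑ i ∈ Finset.range n, g (T^[i] x) with hFdef
  -- per-l bound
  have key_l : ∀ l, l < m → elog (φ n x) ≤ ((S l + 3 * m * Real.log M : ℝ) : EReal) := by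
    intro l hl
    obtain ⟨q, hq1, hq2, hbd⟩ := hdec l hl
    have hP : (0:ℝ) < M ^ l * ((∏ j ∈ Finset.range k, (φ m (T^[l + j * m] x) + ε)) * M ^ q) := by
      apply mul_pos (by positivity)
      exact mul_pos (Finset.prod_pos fun j _ => hfacpos _) (by positivity)
    have h1 : elog (φ n x) ≤ elog (M ^ l * ((∏ j ∈ Finset.range k, (φ m (T^[l + j * m] x) + ε)) * M ^ q)) :=
      elog_mono (hbd x)
    rw [elog_pos_eq hP] at h1
    refine h1.trans ?_
    rw [EReal.coe_le_coe_iff]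
    have hprodpos : (0:ℝ) < ∏ j ∈ Finset.range k, (φ m (T^[l + j * m] x) + ε) :=
      Finset.prod_pos fun j _ => hfacpos _
    rw [Real.log_mul (by positivity) (by positivity),
      Real.log_mul (ne_of_gt hprodpos) (by positivity),
      Real.log_pow, Real.log_pow,
      Real.log_prod (fun j _ => ne_of_gt (hfacpos _))]
    have hlm : (l:ℝ) ≤ m := by exact_mod_cast hl.le
    have hqm : (q:ℝ) ≤ 2 * m := by exact_mod_cast hq2
    have : ∑ j ∈ Finset.range k, Real.log (φ m (T^[l + j * m] x) + ε) = S l := rfl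
    rw [this]
    nlinarith [hlogM]
  -- sum identity
  have sum_S : ∑ l ∈ Finset.range m, S l = Bsum := by
    simp only [hSdef, hBdef]
    exact sum_sum_aux (fun i => g (T^[i] x)) m k
  -- tail bound
  have hBF : Bsum ≤ Fsum + 3 * m * G := by
    have hsplit : Fsum = Bsum + ∑ i ∈ Finset.range (n - k * m), g (T^[k * m + i] x) := by
      rw [hFdef, hBdef, ← Finset.sum_range_add, Nat.add_sub_cancel' hkm]
    have htail : -((n - k*m : ℕ) * G) ≤ ∑ i ∈ Finset.range (n - k * m), g (T^[k * m + i] x) := by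
      calc -((n - k*m : ℕ) * G) = ∑ _i ∈ Finset.range (n - k * m), (-G) := by
            rw [Finset.sum_const, Finset.card_range]; push_cast; ring
        _ ≤ _ := Finset.sum_le_sum fun i _ => neg_le_of_abs_le (hG _)
    have hcard : ((n - k*m : ℕ) : ℝ) ≤ 2 * m := by exact_mod_cast hnk2
    nlinarith [hG0]
  -- choose l
  obtain ⟨l₀, hl₀, hSl₀⟩ : ∃ l ∈ Finset.range m, S l ≤ Bsum / m := by
    apply Finset.exists_le_of_sum_le ⟨0, Finset.mem_range.mpr hm⟩
    rw [sum_S, Finset.sum_const, Finset.card_range, nsmul_eq_mul]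
    rw [mul_div_cancel₀]
    positivity
  refine (key_l l₀ (Finset.mem_range.mp hl₀)).trans ?_
  rw [EReal.coe_le_coe_iff]
  have hmpos : (0:ℝ) < m := by exact_mod_cast hm
  have : Bsum / m ≤ Fsum / m + 3 * G := by
    rw [div_add' _ _ _ (ne_of_gt hmpos), div_le_div_iff_of_pos_right hmpos]
    nlinarith
  linarith
end Comb2

lemma integral_cesaro {X : Type*} [MetricSpace X] [CompactSpace X] [MeasurableSpace X]
    [BorelSpace X] (T : X → X) (hT : Continuous T) (ν : Measure X) [IsProbabilityMeasure ν]
    (n : ℕ) (h : X → ℝ) (hh : Continuous h) :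
    ∫ x, h x ∂(((n : ℝ≥0∞))⁻¹ • ∑ j ∈ Finset.range n, Measure.map (T^[j]) ν)
      = (n:ℝ)⁻¹ * ∑ j ∈ Finset.range n, ∫ x, h (T^[j] x) ∂ν := by
  have hint : ∀ (g : X → ℝ), Continuous g → Integrable g ν := fun g hg => by
    rw [← integrableOn_univ]; exact hg.continuousOn.integrableOn_compact isCompact_univ
  rw [integral_smul_measure, integral_finset_sum_measure (fun j _ => ?_)]
  · rw [ENNReal.toReal_inv, ENNReal.toReal_natCast, smul_eq_mul]
    congr 1
    exact Finset.sum_congr rfl fun j _ =>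
      integral_map (hT.iterate j).measurable.aemeasurable hh.aestronglyMeasurable
  · rw [integrable_map_measure hh.aestronglyMeasurable (hT.iterate j).measurable.aemeasurable]
    exact hint _ (hh.comp (hT.iterate j))

lemma invariance {X : Type*} [MetricSpace X] [CompactSpace X] [MeasurableSpace X] [BorelSpace X]
    (T : X → X) (hT : Continuous T)
    (ν : ℕ → ProbabilityMeasure X) (μ : Measure X) [IsProbabilityMeasure μ]
    (ns : ℕ → ℕ) (hns : StrictMono ns)
    (hconv : ∀ f : X → ℝ, Continuous f →
      Tendsto (fun i : ℕ =>
          ∫ x, f x ∂(((ns i : ℝ≥0∞))⁻¹ •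
            ∑ j ∈ Finset.range (ns i), Measure.map (T^[j]) (ν (ns i) : Measure X)))
        atTop (𝓝 (∫ x, f x ∂μ))) :
    Measure.map T μ = μ := by
  have hint : ∀ (g : X → ℝ), Continuous g → ∀ (ρ : Measure X) [IsFiniteMeasure ρ],
      Integrable g ρ := fun g hg ρ _ => by
    rw [← integrableOn_univ]; exact hg.continuousOn.integrableOn_compact isCompact_univ
  have key : ∀ f : X → ℝ, Continuous f → ∫ x, f (T x) ∂μ = ∫ x, f x ∂μ := by
    intro f hf
    obtain ⟨Cf, hCf⟩ := (isCompact_range (continuous_norm.comp hf)).bddAbove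
    have hCfb : ∀ x, ‖f x‖ ≤ Cf := fun x => hCf ⟨x, rfl⟩
    have hCf0 : 0 ≤ Cf := by
      rcases isEmpty_or_nonempty X with hX | hX
      · have h1 : (μ univ) = 1 := measure_univ
        rw [Set.univ_eq_empty_iff.mpr hX, measure_empty] at h1
        exact absurd h1 zero_ne_one
      · exact (norm_nonneg _).trans (hCfb (Classical.choice hX))
    have hA := hconv (fun x => f (T x)) (hf.comp hT)
    have hB := hconv f hf
    -- difference tendsto 0
    have hdiff : Tendsto (fun i =>
        (∫ x, f (T x) ∂(((ns i : ℝ≥0∞))⁻¹ •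
            ∑ j ∈ Finset.range (ns i), Measure.map (T^[j]) (ν (ns i) : Measure X)))
        - ∫ x, f x ∂(((ns i : ℝ≥0∞))⁻¹ •
            ∑ j ∈ Finset.range (ns i), Measure.map (T^[j]) (ν (ns i) : Measure X)))
        atTop (𝓝 0) := by
      have heval : ∀ i : ℕ, 1 ≤ ns i →
          |(∫ x, f (T x) ∂(((ns i : ℝ≥0∞))⁻¹ •
              ∑ j ∈ Finset.range (ns i), Measure.map (T^[j]) (ν (ns i) : Measure X)))
          - ∫ x, f x ∂(((ns i : ℝ≥0∞))⁻¹ •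
              ∑ j ∈ Finset.range (ns i), Measure.map (T^[j]) (ν (ns i) : Measure X))|
          ≤ 2 * Cf / ns i := by
        intro i hi
        set n := ns i
        set ρ : Measure X := (ν n : Measure X)
        have hIj : ∀ j : ℕ, |∫ x, f (T^[j] x) ∂ρ| ≤ Cf := by
          intro j
          rw [← Real.norm_eq_abs]
          have := norm_integral_le_of_norm_le_const (μ := ρ)
            (f := fun x => f (T^[j] x)) (C := Cf) (Filter.Eventually.of_forall fun x => hCfb _)
          simpa using this
        rw [integral_cesaro T hT ρ n (fun x => f (T x)) (hf.comp hT),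
          integral_cesaro T hT ρ n f hf]
        have hstep : ∀ j : ℕ, ∫ x, f (T (T^[j] x)) ∂ρ = ∫ x, f (T^[j+1] x) ∂ρ := by
          intro j
          congr 1
          ext x
          rw [Function.iterate_succ_apply']
        simp_rw [hstep]
        have htel : ∑ j ∈ Finset.range n, ∫ x, f (T^[j+1] x) ∂ρ
            = ∑ j ∈ Finset.range n, (∫ x, f (T^[j] x) ∂ρ)
              + (∫ x, f (T^[n] x) ∂ρ) - ∫ x, f (T^[0] x) ∂ρ := by
          have h1 := Finset.sum_range_succ (fun j => ∫ x, f (T^[j] x) ∂ρ) n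
          have h2 := Finset.sum_range_succ' (fun j => ∫ x, f (T^[j] x) ∂ρ) n
          rw [h1] at h2
          linarith
        rw [htel]
        have hn0 : (0:ℝ) < n := by exact_mod_cast hi
        rw [← mul_sub, abs_mul, abs_of_pos (by positivity : (0:ℝ) < (n:ℝ)⁻¹)]
        have : |∑ j ∈ Finset.range n, (∫ x, f (T^[j] x) ∂ρ) + (∫ x, f (T^[n] x) ∂ρ)
            - (∫ x, f (T^[0] x) ∂ρ) - ∑ j ∈ Finset.range n, ∫ x, f (T^[j] x) ∂ρ| ≤ 2 * Cf := by
          have := hIj n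
          have := hIj 0
          rw [abs_le] at *
          constructor <;> linarith
        calc (n:ℝ)⁻¹ * |_| ≤ (n:ℝ)⁻¹ * (2*Cf) := by
              exact mul_le_mul_of_nonneg_left this (by positivity)
          _ = 2 * Cf / n := by field_simp
      apply squeeze_zero_norm' _ (by
        have h1 : Tendsto (fun i : ℕ => (ns i : ℝ)) atTop atTop :=
          tendsto_natCast_atTop_atTop.comp hns.tendsto_atTop
        have := h1.inv_tendsto_atTop
        have h2 : Tendsto (fun i : ℕ => 2 * Cf / (ns i : ℝ)) atTop (𝓝 0) := by
          simp_rw [div_eq_mul_inv]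
          simpa using this.const_mul (2*Cf)
        exact h2)
      filter_upwards [eventually_atTop.mpr ⟨1, fun i hi => hi⟩] with i hi
      simpa [Real.norm_eq_abs] using heval i (le_trans hi (hns.le_apply))
    have := hB.add hdiff
    simp only [add_sub_cancel, add_zero] at this
    exact tendsto_nhds_unique hA this
  apply ext_of_forall_lintegral_eq_of_IsFiniteMeasure
  intro f
  have hfc : Continuous fun x => (f x : ℝ) := NNReal.continuous_coe.comp f.continuous
  have h1 : ∫⁻ x, (f x : ℝ≥0∞) ∂(Measure.map T μ) = ∫⁻ x, (f (T x) : ℝ≥0∞) ∂μ :=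
    lintegral_map (by fun_prop) hT.measurable
  rw [h1, lintegral_coe_eq_integral _ (hint _ (hfc.comp hT) μ),
    lintegral_coe_eq_integral _ (hint _ hfc μ)]
  rw [key _ hfc]

/-- Cao–Feng–Huang, Lemma 2.3: if μₙ = (1/n) Σ_{i<n} νₙ ∘ T⁻ⁱ and
μ_{nᵢ} → μ weakly-*, then μ is T-invariant and
limsup (1/nᵢ) ∫ log φ_{nᵢ} dν_{nᵢ} ≤ χ(μ,Φ). -/
theorem limsup_le_lyapunov_of_weak_star_limit
    {X : Type*} [MetricSpace X] [CompactSpace X]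
    [MeasurableSpace X] [BorelSpace X]
    (T : X → X) (hT : Continuous T)
    (φ : ℕ → X → ℝ) (hφ : SubadditivePotential T φ)
    (ν : ℕ → ProbabilityMeasure X)
    (μ : Measure X) [IsProbabilityMeasure μ]
    (ns : ℕ → ℕ) (hns : StrictMono ns)
    (hconv : ∀ f : X → ℝ, Continuous f →
      Tendsto (fun i : ℕ =>
          ∫ x, f x ∂(((ns i : ℝ≥0∞))⁻¹ •
            ∑ j ∈ Finset.range (ns i), Measure.map (T^[j]) (ν (ns i) : Measure X)))
        atTop (𝓝 (∫ x, f x ∂μ)))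
    (χ : EReal)
    (hχ : Tendsto (fun n : ℕ => eint μ (fun x => elog (φ n x)) / (n : EReal)) atTop (𝓝 χ)) :
    Measure.map T μ = μ ∧
      Filter.limsup (fun i : ℕ =>
          eint (ν (ns i) : Measure X) (fun x => elog (φ (ns i) x)) / ((ns i : ℕ) : EReal))
        atTop ≤ χ := by
  obtain ⟨hφc, hφnn, hφsub⟩ := hφ
  refine ⟨invariance T hT ν μ ns hns hconv, ?_⟩
  set L := Filter.limsup (fun i : ℕ =>
      eint (ν (ns i) : Measure X) (fun x => elog (φ (ns i) x)) / ((ns i : ℕ) : EReal))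
    atTop with hLdef
  obtain ⟨M₀, hM₀⟩ := (isCompact_range (hφc 1 le_rfl)).bddAbove
  set M : ℝ := max M₀ 1 with hMdef
  have hM1 : 1 ≤ M := le_max_right _ _
  have hφ1M : ∀ x, φ 1 x ≤ M := fun x => le_trans (hM₀ ⟨x, rfl⟩) (le_max_left _ _)
  -- Step 1: for every m ≥ 1 and ε > 0, L ≤ (∫ log (φ m + ε) dμ) / m
  have hL : ∀ m : ℕ, 1 ≤ m → ∀ ε : ℝ, 0 < ε →
      L ≤ (((∫ x, Real.log (φ m x + ε) ∂μ) / m : ℝ) : EReal) := by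
    intro m hm ε hε
    have hmR : (0:ℝ) < m := by exact_mod_cast hm
    set g : X → ℝ := fun y => Real.log (φ m y + ε) with hgdef
    have hgpos : ∀ y, (0:ℝ) < φ m y + ε := fun y => by have := hφnn m y hm; linarith
    have hgc : Continuous g := ((hφc m hm).add continuous_const).log fun y => ne_of_gt (hgpos y)
    obtain ⟨G, hGmem⟩ := (isCompact_range (continuous_abs.comp hgc)).bddAbove
    have hG : ∀ y, |g y| ≤ G := fun y => hGmem ⟨y, rfl⟩
    set Cc : ℝ := 3 * m * Real.log M + 3 * G with hCcdef
    set μm : ℕ → Measure X := fun i => ((ns i : ℝ≥0∞))⁻¹ •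
      ∑ j ∈ Finset.range (ns i), Measure.map (T^[j]) (ν (ns i) : Measure X) with hμmdef
    set c : ℕ → ℝ := fun i => (∫ x, g x ∂(μm i)) / m + Cc / (ns i) with hcdef
    have hbound : ∀ i : ℕ, 2 * m ≤ ns i →
        eint (ν (ns i) : Measure X) (fun x => elog (φ (ns i) x)) / ((ns i : ℕ) : EReal)
          ≤ ((c i : ℝ) : EReal) := by
      intro i hi
      set n : ℕ := ns i with hndef
      set ρ : Measure X := (ν n : Measure X) with hρdef
      have hn1 : 1 ≤ n := le_trans (by omega) hi
      have hnR : (0:ℝ) < n := by exact_mod_cast hn1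
      have hptw : ∀ x, elog (φ n x)
          ≤ ((((∑ k ∈ Finset.range n, g (T^[k] x)) / m + Cc : ℝ)) : EReal) := by
        intro x
        have := pointwise_bound T φ hφsub hφnn M hM1 hφ1M m hm ε hε G hG n hi x
        simpa [hCcdef, hgdef] using this
      have hHc : Continuous fun x => (∑ k ∈ Finset.range n, g (T^[k] x)) / m + Cc := by
        apply Continuous.add _ continuous_const
        apply Continuous.div_const
        exact continuous_finset_sum _ fun k _ => hgc.comp (hT.iterate k)
      have h1 : eint ρ (fun x => elog (φ n x))
          ≤ ((∫ x, ((∑ k ∈ Finset.range n, g (T^[k] x)) / m + Cc) ∂ρ : ℝ) : EReal) :=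
        eint_le_integral ρ _ _ hHc hptw
      have hintg : ∀ k : ℕ, Integrable (fun x => g (T^[k] x)) ρ := by
        intro k
        rw [← integrableOn_univ]
        exact ((hgc.comp (hT.iterate k)).continuousOn).integrableOn_compact isCompact_univ
      set Sg : ℝ := ∑ j ∈ Finset.range n, ∫ x, g (T^[j] x) ∂ρ with hSgdef
      have h2 : ∫ x, ((∑ k ∈ Finset.range n, g (T^[k] x)) / m + Cc) ∂ρ = Sg / m + Cc := by
        rw [integral_add _ (integrable_const _)]
        · rw [integral_div, integral_finset_sum _ fun k _ => hintg k, integral_const]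
          simp [measure_univ]
          rw [hSgdef]
        · exact (integrable_finset_sum _ fun k _ => hintg k).div_const m
      have hIn : ∫ x, g x ∂(μm i) = (n:ℝ)⁻¹ * Sg := by
        rw [hμmdef]
        exact integral_cesaro T hT ρ n g hgc
      have hSg : Sg = n * ∫ x, g x ∂(μm i) := by
        rw [hIn]; field_simp
      have h3 : ((Sg / m + Cc : ℝ) : EReal) / ((n : ℕ) : EReal) = ((c i : ℝ) : EReal) := by
        rw [← EReal.coe_coe_eq_natCast, ← EReal.coe_div, EReal.coe_eq_coe_iff]
        rw [hcdef]
        simp only [← hndef]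
        rw [hSg]
        field_simp
      rw [← h3]
      apply EReal.div_le_div_right_of_nonneg
      · have : ((0:ℕ) : EReal) ≤ ((n:ℕ) : EReal) := EReal.natCast_le_iff.mpr (Nat.zero_le n)
        simpa using this
      · rw [h2] at h1
        exact h1
    have hev : ∀ᶠ i in atTop, eint (ν (ns i) : Measure X) (fun x => elog (φ (ns i) x))
        / ((ns i : ℕ) : EReal) ≤ ((c i : ℝ) : EReal) := by
      filter_upwards [eventually_atTop.mpr ⟨2 * m, fun i hi => hi⟩] with i hi
      exact hbound i (le_trans hi hns.le_apply)
    have hctend : Tendsto c atTop (𝓝 ((∫ x, g x ∂μ) / m)) := by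
      have h1 : Tendsto (fun i => (∫ x, g x ∂(μm i)) / m) atTop (𝓝 ((∫ x, g x ∂μ) / m)) :=
        (hconv g hgc).div_const m
      have h2 : Tendsto (fun i : ℕ => Cc / (ns i : ℝ)) atTop (𝓝 0) := by
        have hns' : Tendsto (fun i : ℕ => (ns i : ℝ)) atTop atTop :=
          tendsto_natCast_atTop_atTop.comp hns.tendsto_atTop
        simp_rw [div_eq_mul_inv]
        simpa using hns'.inv_tendsto_atTop.const_mul Cc
      simpa using h1.add h2
    calc L ≤ Filter.limsup (fun i => ((c i : ℝ) : EReal)) atTop := limsup_le_limsup hev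
      _ = (((∫ x, g x ∂μ) / m : ℝ) : EReal) := (EReal.tendsto_coe.mpr hctend).limsup_eq
  -- Step 2: for every m ≥ 1, L ≤ eint μ (elog (φ m)) / m
  have hLm : ∀ m : ℕ, 1 ≤ m → L ≤ eint μ (fun x => elog (φ m x)) / ((m : ℕ) : EReal) := by
    intro m hm
    have hmR : (0:ℝ) < m := by exact_mod_cast hm
    have hmE : (0:EReal) < ((m:ℕ) : EReal) := by
      have : ((0:ℕ) : EReal) < ((m:ℕ) : EReal) := EReal.natCast_lt_iff.mpr hm
      simpa using this
    set R : ℕ → ℝ := fun j => ∫ x, Real.log (φ m x + 1/(j+1)) ∂μ with hRdef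
    have h2 : ∀ j : ℕ, L ≤ (((R j) / m : ℝ) : EReal) := fun j => hL m hm _ (by positivity)
    have Htend : Tendsto (fun j => ((R j : ℝ) : EReal)) atTop
        (𝓝 (eint μ (fun x => elog (φ m x)))) :=
      tendsto_integral_log_add μ (φ m) (hφc m hm) (fun x => hφnn m x hm)
    set E : EReal := eint μ (fun x => elog (φ m x)) with hEdef
    clear_value E
    induction E with
    | bot =>
      have hRatBot : Tendsto R atTop atBot := by
        rw [tendsto_atBot]
        intro b
        filter_upwards [(EReal.tendsto_nhds_bot_iff_real.mp Htend) b] with j hj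
        exact (EReal.coe_lt_coe_iff.mp hj).le
      have hdiv : Tendsto (fun j => R j / m) atTop atBot := hRatBot.atBot_div_const hmR
      have hcoe : Tendsto (fun j => ((R j / m : ℝ) : EReal)) atTop (𝓝 ⊥) := by
        rw [EReal.tendsto_nhds_bot_iff_real]
        intro x
        filter_upwards [hdiv.eventually_le_atBot (x - 1)] with j hj
        exact lt_of_le_of_lt (EReal.coe_le_coe_iff.mpr hj)
          (EReal.coe_lt_coe_iff.mpr (by linarith))
      have hLbot : L ≤ ⊥ := ge_of_tendsto hcoe (Eventually.of_forall h2)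
      rw [EReal.bot_div_of_pos_ne_top hmE (EReal.natCast_ne_top m)]
      exact hLbot
    | coe e =>
      have hR : Tendsto R atTop (𝓝 e) := EReal.tendsto_coe.mp Htend
      have hdiv : Tendsto (fun j => R j / m) atTop (𝓝 (e / m)) := hR.div_const m
      have := ge_of_tendsto (EReal.tendsto_coe.mpr hdiv) (Eventually.of_forall h2)
      rwa [EReal.coe_div, EReal.coe_coe_eq_natCast] at this
    | top =>
      rw [EReal.top_div_of_pos_ne_top hmE (EReal.natCast_ne_top m)]
      exact le_top
  exact ge_of_tendsto hχ (eventually_atTop.mpr ⟨1, fun m hm => by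
    simpa using hLm m hm⟩)
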